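/- Let R be a commutative ℚ(q)-algebra and let H(z) = ∑_{n≥0} h_n z^n and E(z) = ∑_{n≥0} (-1)^n e_n z^n be formal power series over R with h_0 = e_0 = 1 and H(z)·E(z) = 1. Then H(q^{-1}z)·E(qz) = 1 - (q - q^{-1})·∑_{n≥1} (-q)^n (∑_{m=0}^n (-q)^{-m} [m] h_m e_{n-m}) z^n. -/

import Mathlib

noncomputable def q : RatFunc ℚ := RatFunc.X

/-- The quantum integer [n] = (q^n - q^{-n})/(q - q^{-1}) in ℚ(q). -/
noncomputable def qint (n : ℤ) : RatFunc ℚ := (q ^ n - q ^ (-n)) / (q - q⁻¹)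

lemma q_ne_zero : q ≠ 0 := RatFunc.X_ne_zero

lemma qq_ne_zero : q - q⁻¹ ≠ 0 := by
  intro hc
  have h2 := sub_eq_zero.mp hc
  field_simp [q_ne_zero] at h2
  have h3 : (Polynomial.X * Polynomial.X : Polynomial ℚ) = 1 := by
    apply RatFunc.algebraMap_injective ℚ
    rw [map_mul, RatFunc.algebraMap_X, map_one]
    have h2' : (RatFunc.X : RatFunc ℚ) = 1 ∨ (RatFunc.X : RatFunc ℚ) = -1 := by simpa [q] using h2
    rcases h2' with h2' | h2' <;> rw [h2'] <;> ring
  have := congrArg (Polynomial.eval 0) h3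
  simp at this

lemma key (m k : ℕ) :
    (q⁻¹) ^ m * q ^ k * (-1) ^ k =
      -((q - q⁻¹) * (-q) ^ (m + k) * ((-q) ^ (-(m : ℤ)) * qint m)) + (-1) ^ k * q ^ (m + k) := by
  have h1 : (q - q⁻¹) * qint m = q ^ m - (q ^ m)⁻¹ := by
    rw [qint, zpow_natCast, zpow_neg, zpow_natCast, mul_div_cancel₀ _ qq_ne_zero]
  have trans : (q - q⁻¹) * (-q) ^ (m + k) * ((-q) ^ (-(m : ℤ)) * qint m)
      = (-q) ^ (m + k) * ((-q) ^ m)⁻¹ * (q ^ m - (q ^ m)⁻¹) := by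
    rw [zpow_neg, zpow_natCast, ← h1]; ring
  rw [trans]
  field_simp [q_ne_zero]
  rw [one_div, inv_pow]
  field_simp [q_ne_zero]
  ring

lemma key' {R : Type*} [CommRing R] [Algebra (RatFunc ℚ) R] (m k : ℕ) :
    (algebraMap (RatFunc ℚ) R q⁻¹) ^ m * (algebraMap (RatFunc ℚ) R q) ^ k * (-1 : R) ^ k =
      -((algebraMap (RatFunc ℚ) R q - algebraMap (RatFunc ℚ) R q⁻¹) *
            (-(algebraMap (RatFunc ℚ) R q)) ^ (m + k) *
          (algebraMap (RatFunc ℚ) R ((-q) ^ (-(m : ℤ))) * algebraMap (RatFunc ℚ) R (qint m))) +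
        (-1 : R) ^ k * (algebraMap (RatFunc ℚ) R q) ^ (m + k) := by
  have := congrArg (algebraMap (RatFunc ℚ) R) (key m k)
  simpa only [map_mul, map_sub, map_neg, map_pow, map_one, map_add] using this

open PowerSeries Finset in
theorem halves_of_vertex_operators_minus {R : Type*} [CommRing R] [Algebra (RatFunc ℚ) R]
    (h e : ℕ → R) (h0 : h 0 = 1) (e0 : e 0 = 1)
    (H E : PowerSeries R)
    (hH : H = PowerSeries.mk fun n => h n)
    (hE : E = PowerSeries.mk fun n => (-1 : R) ^ n * e n)
    (hHE : H * E = 1) :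
    PowerSeries.rescale (algebraMap (RatFunc ℚ) R q⁻¹) H *
        PowerSeries.rescale (algebraMap (RatFunc ℚ) R q) E =
      1 - PowerSeries.mk (fun n => if n = 0 then 0 else
        algebraMap (RatFunc ℚ) R ((q - q⁻¹) * (-q) ^ n) *
          ∑ m ∈ Finset.range (n + 1),
            algebraMap (RatFunc ℚ) R ((-q) ^ (-(m : ℤ)) * qint m) * (h m * e (n - m))) := by
  set c := algebraMap (RatFunc ℚ) R with hc
  ext n
  rw [map_sub, PowerSeries.coeff_mul, PowerSeries.coeff_one, coeff_mk]
  rcases eq_or_ne n 0 with rfl | hn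
  · simp [hH, hE, coeff_rescale, h0, e0]
  · rw [if_neg hn, if_neg hn]
    have hHEn : ∑ p ∈ antidiagonal n, h p.1 * ((-1 : R) ^ p.2 * e p.2) = 0 := by
      have h1 := congrArg (PowerSeries.coeff n) hHE
      rw [PowerSeries.coeff_mul, PowerSeries.coeff_one, if_neg hn] at h1
      simpa [hH, hE, coeff_mk] using h1
    have step1 : ∀ p ∈ antidiagonal n,
        (coeff p.1) (rescale (c q⁻¹) H) * (coeff p.2) (rescale (c q) E) =
          -(c ((q - q⁻¹) * (-q) ^ n) * (c ((-q) ^ (-(p.1 : ℤ)) * qint p.1) * (h p.1 * e p.2))) +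
            c (q ^ n) * (h p.1 * ((-1 : R) ^ p.2 * e p.2)) := by
      intro p hp
      have hpn : p.1 + p.2 = n := mem_antidiagonal.mp hp
      rw [hH, hE, coeff_rescale, coeff_rescale, coeff_mk, coeff_mk]
      simp only [map_mul, map_sub, map_neg, map_pow]
      rw [← hpn]
      linear_combination (h p.1 * e p.2) * key' (R := R) p.1 p.2
    rw [sum_congr rfl step1, sum_add_distrib]
    have hB : ∑ p ∈ antidiagonal n, c (q ^ n) * (h p.1 * ((-1 : R) ^ p.2 * e p.2)) = 0 := by
      rw [← mul_sum, hHEn, mul_zero]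
    rw [hB, add_zero]
    have hA : ∑ p ∈ antidiagonal n,
        -(c ((q - q⁻¹) * (-q) ^ n) * (c ((-q) ^ (-(p.1 : ℤ)) * qint p.1) * (h p.1 * e p.2))) =
        -(c ((q - q⁻¹) * (-q) ^ n) * ∑ p ∈ antidiagonal n,
            c ((-q) ^ (-(p.1 : ℤ)) * qint p.1) * (h p.1 * e p.2)) := by
      rw [mul_sum, ← Finset.sum_neg_distrib]
    rw [hA, Finset.Nat.sum_antidiagonal_eq_sum_range_succ_mk
      (f := fun p => c ((-q) ^ (-(p.1 : ℤ)) * qint p.1) * (h p.1 * e p.2))]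
    ring
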